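/- For the R-matrix of U_q(sl₂) on V₁ ⊗ V₁, no scalar multiple g(q)·(flip ∘ R), g(q) ∈ C(q^{1/2}), maps the crystal lattice L = Span_A{v₁⊗v₁, v₋₁⊗v₁, v₁⊗v₋₁, v₋₁⊗v₋₁} into itself and induces an isomorphism on L/q^{−1/2}L. -/

import Mathlib

noncomputable section

/-- The formal variable `q^{1/2}`, realized as the generator `X` of `ℂ(q^{1/2})`. -/
def s : RatFunc ℂ := RatFunc.X

/-- The quantum parameter `q = (q^{1/2})²`. -/
def qq : RatFunc ℂ := RatFunc.X ^ 2

set_option synthInstance.maxHeartbeats 800000 in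
/-- The matrix of `flip ∘ R` on `V₁ ⊗ V₁` in the ordered tensor basis
`{v₁⊗v₁, v₋₁⊗v₁, v₁⊗v₋₁, v₋₁⊗v₋₁}`. -/
def flipR : Matrix (Fin 4) (Fin 4) (RatFunc ℂ) :=
  s⁻¹ • !![qq, 0, 0, 0; 0, qq - qq⁻¹, 1, 0; 0, 1, 0, 0; 0, 0, 0, qq]

/-- The ring `A` of rational functions in `ℂ(q^{1/2})` that are regular at `q = ∞`. -/
def Areg : Set (RatFunc ℂ) :=
  {f | ∃ p r : Polynomial ℂ, r ≠ 0 ∧ p.natDegree ≤ r.natDegree ∧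
    f = algebraMap (Polynomial ℂ) (RatFunc ℂ) p / algebraMap (Polynomial ℂ) (RatFunc ℂ) r}

lemma zero_mem_Areg : (0 : RatFunc ℂ) ∈ Areg :=
  ⟨0, 1, one_ne_zero, by simp, by simp⟩

lemma one_mem_Areg : (1 : RatFunc ℂ) ∈ Areg :=
  ⟨1, 1, one_ne_zero, le_rfl, by simp⟩

lemma sinv_mem_Areg : s⁻¹ ∈ Areg :=
  ⟨1, Polynomial.X, Polynomial.X_ne_zero, by simp, by
    rw [map_one, RatFunc.algebraMap_X, one_div]; rfl⟩

lemma mul_mem_Areg {f g : RatFunc ℂ} (hf : f ∈ Areg) (hg : g ∈ Areg) :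
    f * g ∈ Areg := by
  obtain ⟨p1, r1, hr1, hd1, rfl⟩ := hf
  obtain ⟨p2, r2, hr2, hd2, rfl⟩ := hg
  refine ⟨p1 * p2, r1 * r2, mul_ne_zero hr1 hr2, ?_, ?_⟩
  · calc (p1 * p2).natDegree ≤ p1.natDegree + p2.natDegree := Polynomial.natDegree_mul_le
      _ ≤ r1.natDegree + r2.natDegree := add_le_add hd1 hd2
      _ = (r1 * r2).natDegree := (Polynomial.natDegree_mul hr1 hr2).symm
  · rw [map_mul, map_mul, div_mul_div_comm]

lemma sub_mem_Areg {f g : RatFunc ℂ} (hf : f ∈ Areg) (hg : g ∈ Areg) :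
    f - g ∈ Areg := by
  obtain ⟨p1, r1, hr1, hd1, rfl⟩ := hf
  obtain ⟨p2, r2, hr2, hd2, rfl⟩ := hg
  refine ⟨p1 * r2 - r1 * p2, r1 * r2, mul_ne_zero hr1 hr2, ?_, ?_⟩
  · refine le_trans (Polynomial.natDegree_sub_le _ _) (max_le ?_ ?_)
    · calc (p1 * r2).natDegree ≤ p1.natDegree + r2.natDegree := Polynomial.natDegree_mul_le
        _ ≤ r1.natDegree + r2.natDegree := add_le_add_left hd1 _
        _ = (r1 * r2).natDegree := (Polynomial.natDegree_mul hr1 hr2).symm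
    · calc (r1 * p2).natDegree ≤ r1.natDegree + p2.natDegree := Polynomial.natDegree_mul_le
        _ ≤ r1.natDegree + r2.natDegree := add_le_add_right hd2 _
        _ = (r1 * r2).natDegree := (Polynomial.natDegree_mul hr1 hr2).symm
  · rw [map_sub, map_mul, map_mul, map_mul,
      div_sub_div _ _ (RatFunc.algebraMap_ne_zero hr1) (RatFunc.algebraMap_ne_zero hr2)]

lemma s_not_mem_Areg : s ∉ Areg := by
  rintro ⟨p, r, hr, hd, heq⟩
  rw [eq_div_iff (RatFunc.algebraMap_ne_zero hr)] at heq
  have h2 : algebraMap (Polynomial ℂ) (RatFunc ℂ) p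
      = algebraMap (Polynomial ℂ) (RatFunc ℂ) (Polynomial.X * r) := by
    rw [map_mul, RatFunc.algebraMap_X, ← heq]; rfl
  have hp : p = Polynomial.X * r := RatFunc.algebraMap_injective ℂ h2
  rw [hp, Polynomial.natDegree_mul Polynomial.X_ne_zero hr,
    Polynomial.natDegree_X] at hd
  omega

set_option synthInstance.maxHeartbeats 800000 in
set_option maxHeartbeats 1600000 in
theorem aux_main :
    ¬ ∃ g : RatFunc ℂ,
      (∀ v : Fin 4 → RatFunc ℂ, (∀ i, v i ∈ Areg) →
        ∀ i, (g • flipR).mulVec v i ∈ Areg) ∧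
      (∀ w : Fin 4 → RatFunc ℂ, (∀ i, w i ∈ Areg) →
        ∃ v : Fin 4 → RatFunc ℂ, (∀ i, v i ∈ Areg) ∧
          ∀ i, s * ((g • flipR).mulVec v i - w i) ∈ Areg) ∧
      (∀ v : Fin 4 → RatFunc ℂ, (∀ i, v i ∈ Areg) →
        (∀ i, s * ((g • flipR).mulVec v i) ∈ Areg) → ∀ i, s * v i ∈ Areg) := by
  rintro ⟨g, h1, h2, -⟩
  have hsne : s ≠ 0 := RatFunc.X_ne_zero
  -- g * s ∈ Areg
  set e0 : Fin 4 → RatFunc ℂ := ![1, 0, 0, 0] with he0def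
  have he0 : ∀ i, e0 i ∈ Areg := by
    intro i
    fin_cases i <;> simp [he0def, zero_mem_Areg, one_mem_Areg]
  set_option maxHeartbeats 1600000 in
  have key0 : (g • flipR).mulVec e0 0 = g * s := by
    have hq : s⁻¹ * qq = s := by
      rw [qq, s, sq, inv_mul_cancel_left₀ RatFunc.X_ne_zero]
    simp only [flipR, Matrix.smul_apply, smul_eq_mul, Matrix.mulVec, dotProduct,
      Fin.sum_univ_four, he0def, Matrix.of_apply, Matrix.cons_val', Matrix.cons_val_zero, Matrix.cons_val_one,
      Matrix.head_cons, Matrix.empty_val', Matrix.cons_val_fin_one, Matrix.head_fin_const,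
      Matrix.cons_val_two, Matrix.cons_val_three, Matrix.tail_cons, mul_one, mul_zero,
      add_zero, zero_add]
    rw [hq]
  have hgs : g * s ∈ Areg := key0 ▸ h1 e0 he0 0
  -- surjectivity onto e2 gives a contradiction
  set e2 : Fin 4 → RatFunc ℂ := ![0, 0, 1, 0] with he2def
  have he2 : ∀ i, e2 i ∈ Areg := by
    intro i
    fin_cases i <;> simp [he2def, zero_mem_Areg, one_mem_Areg]
  obtain ⟨v, hv, hv2⟩ := h2 e2 he2
  set_option maxHeartbeats 1600000 in
  have key2 : (g • flipR).mulVec v 2 = g * (s⁻¹ * v 1) := by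
    simp only [flipR, Matrix.smul_apply, smul_eq_mul, Matrix.mulVec, dotProduct,
      Fin.sum_univ_four, Matrix.of_apply, Matrix.cons_val', Matrix.cons_val_zero, Matrix.cons_val_one,
      Matrix.head_cons, Matrix.empty_val', Matrix.cons_val_fin_one, Matrix.head_fin_const,
      Matrix.cons_val_two, Matrix.cons_val_three, Matrix.tail_cons, mul_one, mul_zero,
      zero_mul, add_zero, zero_add]
    ring
  have h3 : s * ((g • flipR).mulVec v 2 - e2 2) = g * v 1 - s := by
    rw [key2]
    have : e2 2 = 1 := by simp [he2def]
    rw [this]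
    field_simp
  have h4 : g * v 1 - s ∈ Areg := h3 ▸ hv2 2
  have h5 : g * v 1 ∈ Areg := by
    have : g * v 1 = (g * s) * (s⁻¹ * v 1) := by field_simp
    rw [this]
    exact mul_mem_Areg hgs (mul_mem_Areg sinv_mem_Areg (hv 1))
  have h6 : s ∈ Areg := by
    have := sub_mem_Areg h5 h4
    simpa using this
  exact s_not_mem_Areg h6

set_option synthInstance.maxHeartbeats 800000 in
/-- No scalar multiple `g(q)·(flip ∘ R)`, `g(q) ∈ ℂ(q^{1/2})`, maps the crystal lattice
`L = Span_A{v₁⊗v₁, v₋₁⊗v₁, v₁⊗v₋₁, v₋₁⊗v₋₁}` into itself and induces an isomorphism on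
`L/q^{-1/2}L` (an element of `q^{-1/2}L` is a vector `v` with `s·vᵢ ∈ A` for all `i`;
inducing an isomorphism is expressed by surjectivity and injectivity modulo
`q^{-1/2}L`). -/
theorem no_scalar_multiple_of_flipR_preserves_lattice :
    ¬ ∃ g : RatFunc ℂ,
      (∀ v : Fin 4 → RatFunc ℂ, (∀ i, v i ∈ Areg) →
        ∀ i, (g • flipR).mulVec v i ∈ Areg) ∧
      (∀ w : Fin 4 → RatFunc ℂ, (∀ i, w i ∈ Areg) →
        ∃ v : Fin 4 → RatFunc ℂ, (∀ i, v i ∈ Areg) ∧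
          ∀ i, s * ((g • flipR).mulVec v i - w i) ∈ Areg) ∧
      (∀ v : Fin 4 → RatFunc ℂ, (∀ i, v i ∈ Areg) →
        (∀ i, s * ((g • flipR).mulVec v i) ∈ Areg) → ∀ i, s * v i ∈ Areg) := by
  exact aux_main
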